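/- arXiv:1906.08134 — 6 statements merged into one kernel-verified Lean document; each statement's English description precedes it below -/
import Mathlib

section
/- For F(S) = S²(1 + N_g(1−S)²)/(S² + M(1−S)²) with 0 < N_g ≤ M, one has F'(S) > 0 for all S in (0,1). -/
/-- For F(S) = S²(1 + N_g(1−S)²)/(S² + M(1−S)²) with 0 < N_g ≤ M,
one has F'(S) > 0 on (0,1). -/
theorem stmt2 (M Ng : ℝ) (hM : 0 < M) (hNg : 0 < Ng) (hle : Ng ≤ M) (F : ℝ → ℝ)
    (hF : ∀ S, F S = S ^ 2 * (1 + Ng * (1 - S) ^ 2) / (S ^ 2 + M * (1 - S) ^ 2)) :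
    ∀ S ∈ Set.Ioo (0 : ℝ) 1, 0 < deriv F S := by
  intro S hS
  obtain ⟨hS0, hS1⟩ := hS
  have hDpos : 0 < S ^ 2 + M * (1 - S) ^ 2 := by positivity
  have hD : S ^ 2 + M * (1 - S) ^ 2 ≠ 0 := ne_of_gt hDpos
  have hsub : HasDerivAt (fun x : ℝ => 1 - x) (-1) S := by
    simpa using (hasDerivAt_id S).const_sub 1
  have hnum : HasDerivAt (fun x : ℝ => x ^ 2 * (1 + Ng * (1 - x) ^ 2))
      (2 * S * (1 + Ng * (1 - S) ^ 2) + S ^ 2 * (Ng * (2 * (1 - S) * (-1)))) S := by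
    have h1 : HasDerivAt (fun x : ℝ => x ^ 2) (2 * S) S := by
      simpa using hasDerivAt_pow 2 S
    have h2 : HasDerivAt (fun x : ℝ => 1 + Ng * (1 - x) ^ 2)
        (Ng * (2 * (1 - S) * (-1))) S := by
      have := (hsub.pow 2).const_mul Ng
      simpa [mul_comm, mul_left_comm, mul_assoc] using this.const_add 1
    exact (h1.mul h2).congr_deriv (by ring)
  have hden : HasDerivAt (fun x : ℝ => x ^ 2 + M * (1 - x) ^ 2)
      (2 * S + M * (2 * (1 - S) * (-1))) S := by
    have h1 : HasDerivAt (fun x : ℝ => x ^ 2) (2 * S) S := by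
      simpa using hasDerivAt_pow 2 S
    have h2 : HasDerivAt (fun x : ℝ => M * (1 - x) ^ 2)
        (M * (2 * (1 - S) * (-1))) S := by
      have := (hsub.pow 2).const_mul M
      simpa [mul_comm, mul_left_comm, mul_assoc] using this
    exact h1.add h2
  have hFd : HasDerivAt F
      (((2 * S * (1 + Ng * (1 - S) ^ 2) + S ^ 2 * (Ng * (2 * (1 - S) * (-1)))) *
          (S ^ 2 + M * (1 - S) ^ 2) -
        S ^ 2 * (1 + Ng * (1 - S) ^ 2) * (2 * S + M * (2 * (1 - S) * (-1)))) /
        (S ^ 2 + M * (1 - S) ^ 2) ^ 2) S := by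
    have := hnum.div hden hD
    have hfun : F = fun x : ℝ => x ^ 2 * (1 + Ng * (1 - x) ^ 2) / (x ^ 2 + M * (1 - x) ^ 2) :=
      funext hF
    rw [hfun]
    exact this
  rw [hFd.deriv]
  apply div_pos
  · have key : (2 * S * (1 + Ng * (1 - S) ^ 2) + S ^ 2 * (Ng * (2 * (1 - S) * (-1)))) *
        (S ^ 2 + M * (1 - S) ^ 2) -
        S ^ 2 * (1 + Ng * (1 - S) ^ 2) * (2 * S + M * (2 * (1 - S) * (-1))) =
        2 * S * (1 - S) * (M * (1 + Ng * (1 - S) ^ 3) - Ng * S ^ 3) := by ring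
    rw [key]
    have h1 : 0 < 1 - S := by linarith
    have h2 : Ng * S ^ 3 < M * (1 + Ng * (1 - S) ^ 3) := by
      nlinarith [pow_lt_one₀ (le_of_lt hS0) hS1 (by norm_num : 3 ≠ 0),
        pow_pos h1 3, mul_pos hM (pow_pos h1 3)]
    have : 0 < M * (1 + Ng * (1 - S) ^ 3) - Ng * S ^ 3 := by linarith
    positivity
  · positivity
end

section
/- Under the convex–concave assumptions on F and with S_B ∈ (0, S_o), the wave-speed function c(S_T) = (F(S_T) − F(S_B))/(S_T − S_B) is strictly increasing for S_T ∈ (S_B, S̄], where S̄ is the unique point with F'(S̄) = (F(S̄)−F(S_B))/(S̄−S_B); moreover c(S_T) → F'(S_B) as S_T → S_B⁺. -/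
open Set

/-- The wave-speed c(S_T) = (F(S_T) − F(S_B))/(S_T − S_B) is strictly
increasing on (S_B, S̄] and tends to F'(S_B) as S_T → S_B⁺. -/
theorem stmt5 (F : ℝ → ℝ) (hF : ContDiffOn ℝ 2 F (Set.Icc 0 1))
    (hF0 : F 0 = 0) (hF1 : F 1 = 1)
    (hF' : ∀ S ∈ Set.Ioo (0:ℝ) 1, 0 < deriv F S)
    (So : ℝ) (hSo : So ∈ Set.Ioo (0:ℝ) 1)
    (hconv : ∀ S ∈ Set.Ioo 0 So, 0 < deriv (deriv F) S)
    (hconc : ∀ S ∈ Set.Ioo So 1, deriv (deriv F) S < 0)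
    (SB : ℝ) (hSB : SB ∈ Set.Ioo (0:ℝ) So)
    (Sbar : ℝ) (hSbar : Sbar ∈ Set.Ioo SB 1)
    (htan : deriv F Sbar = (F Sbar - F SB) / (Sbar - SB))
    (huniq : ∀ S ∈ Set.Ioo SB 1, deriv F S = (F S - F SB) / (S - SB) → S = Sbar) :
    StrictMonoOn (fun ST => (F ST - F SB) / (ST - SB)) (Set.Ioc SB Sbar) ∧
      Filter.Tendsto (fun ST => (F ST - F SB) / (ST - SB))
        (nhdsWithin SB (Set.Ioi SB)) (nhds (deriv F SB)) := by
  obtain ⟨hSB0, hSBo⟩ := hSB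
  obtain ⟨hSo0, hSo1⟩ := hSo
  obtain ⟨hSbarB, hSbar1⟩ := hSbar
  have hSB1 : SB < 1 := hSBo.trans hSo1
  have hF2 : ContDiffOn ℝ 2 F (Ioo 0 1) := hF.mono Ioo_subset_Icc_self
  have hopen : IsOpen (Ioo (0:ℝ) 1) := isOpen_Ioo
  have hFd : ∀ x ∈ Ioo (0:ℝ) 1, HasDerivAt F (deriv F x) x := by
    intro x hx
    exact ((hF2.differentiableOn (by norm_num)).differentiableAt
      (hopen.mem_nhds hx)).hasDerivAt
  have hF'cd : ContDiffOn ℝ 1 (deriv F) (Ioo 0 1) := by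
    exact hF2.deriv_of_isOpen (m := 1) hopen (by norm_num)
  have hF'd : ∀ x ∈ Ioo (0:ℝ) 1, HasDerivAt (deriv F) (deriv (deriv F) x) x := by
    intro x hx
    exact ((hF'cd.differentiableOn one_ne_zero).differentiableAt
      (hopen.mem_nhds hx)).hasDerivAt
  set g : ℝ → ℝ := fun S => deriv F S * (S - SB) - (F S - F SB) with hg
  have hgd : ∀ x ∈ Ioo (0:ℝ) 1, HasDerivAt g (deriv (deriv F) x * (x - SB)) x := by
    intro x hx
    have h1 := ((hF'd x hx).mul ((hasDerivAt_id x).sub_const SB)).sub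
      ((hFd x hx).sub_const (F SB))
    refine h1.congr_deriv ?_
    simp only [id_eq]
    ring
  have hgcont : ContinuousOn g (Ioo 0 1) := by
    apply ContinuousOn.sub
    · exact hF'cd.continuousOn.mul (by fun_prop)
    · exact hF2.continuousOn.sub continuousOn_const
  have hgSB : g SB = 0 := by simp [hg]
  have hneSb : Sbar - SB ≠ 0 := sub_ne_zero.mpr (ne_of_gt hSbarB)
  have hgSbar : g Sbar = 0 := by
    simp only [hg]
    rw [htan]
    field_simp
    ring
  have hmono : StrictMonoOn g (Icc SB So) := by
    apply strictMonoOn_of_deriv_pos (convex_Icc _ _)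
    · exact hgcont.mono (fun x hx => ⟨hSB0.trans_le hx.1, hx.2.trans_lt hSo1⟩)
    · intro x hx
      rw [interior_Icc] at hx
      have hxI : x ∈ Ioo (0:ℝ) 1 := ⟨hSB0.trans hx.1, hx.2.trans hSo1⟩
      rw [(hgd x hxI).deriv]
      exact mul_pos (hconv x ⟨hSB0.trans hx.1, hx.2⟩) (sub_pos.mpr hx.1)
  have hSoSbar : So < Sbar := by
    by_contra h
    push_neg at h
    have := hmono (left_mem_Icc.mpr (hSBo.le)) ⟨hSbarB.le, h⟩ hSbarB
    rw [hgSB, hgSbar] at this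
    exact lt_irrefl 0 this
  have hanti : StrictAntiOn g (Icc So Sbar) := by
    apply strictAntiOn_of_deriv_neg (convex_Icc _ _)
    · exact hgcont.mono (fun x hx => ⟨hSo0.trans_le hx.1, hx.2.trans_lt hSbar1⟩)
    · intro x hx
      rw [interior_Icc] at hx
      have hxI : x ∈ Ioo (0:ℝ) 1 := ⟨hSo0.trans hx.1, hx.2.trans hSbar1⟩
      rw [(hgd x hxI).deriv]
      have h1 : deriv (deriv F) x < 0 := hconc x ⟨hx.1, hx.2.trans hSbar1⟩
      have h2 : 0 < x - SB := sub_pos.mpr (hSBo.trans hx.1)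
      exact mul_neg_of_neg_of_pos h1 h2
  have hgpos : ∀ x ∈ Ioo SB Sbar, 0 < g x := by
    intro x hx
    rcases le_or_gt x So with h | h
    · have := hmono (left_mem_Icc.mpr hSBo.le) ⟨hx.1.le, h⟩ hx.1
      rwa [hgSB] at this
    · have := hanti ⟨h.le, hx.2.le⟩ (right_mem_Icc.mpr hSoSbar.le) hx.2
      rwa [hgSbar] at this
  constructor
  · apply strictMonoOn_of_deriv_pos (convex_Ioc _ _)
    · apply ContinuousOn.div
      · exact (hF2.continuousOn.sub continuousOn_const).mono
          (fun x hx => ⟨hSB0.trans hx.1, lt_of_le_of_lt hx.2 hSbar1⟩)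
      · fun_prop
      · intro x hx
        exact sub_ne_zero.mpr (ne_of_gt hx.1)
    · intro x hx
      rw [interior_Ioc] at hx
      have hxI : x ∈ Ioo (0:ℝ) 1 := ⟨hSB0.trans hx.1, hx.2.trans hSbar1⟩
      have hxne : x - SB ≠ 0 := sub_ne_zero.mpr (ne_of_gt hx.1)
      have hd : HasDerivAt (fun ST => (F ST - F SB) / (ST - SB))
          ((deriv F x * (x - SB) - (F x - F SB) * 1) / (x - SB) ^ 2) x :=
        ((hFd x hxI).sub_const (F SB)).div ((hasDerivAt_id x).sub_const SB) hxne
      rw [hd.deriv]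
      apply div_pos
      · have := hgpos x hx
        simp only [hg] at this
        linarith
      · positivity
  · have h := hFd SB ⟨hSB0, hSB1⟩
    have htend := hasDerivAt_iff_tendsto_slope.mp h
    have heq : (fun ST => (F ST - F SB) / (ST - SB)) = slope F SB := by
      funext y
      rw [slope_def_field]
    rw [heq]
    exact htend.mono_left (nhdsWithin_mono _ (fun y hy => Set.mem_compl_singleton_iff.mpr hy.ne'))
end

section
/- Let F be convex–concave as above, fix S_B ∈ (0,S_o), and let S̃ ∈ (S_B,1) be the point where the graph of F intersects the chord from (S_B,F(S_B)) to (1,1), i.e. F(S̃) = F(S_B) + (1−F(S_B))(S̃−S_B)/(1−S_B) with S̃ ≠ S_B, 1. Then for S̃ < α < S̄ the chord ℓ(S;α) = F(S_B) + (F(α)−F(S_B))(S−S_B)/(α−S_B) intersects the graph of F at exactly one further point β(α) ∈ (α,1), and F(S) < ℓ(S;α) for S ∈ (S_B,α), F(S) > ℓ(S;α) for S ∈ (α,β(α)), and F(S) < ℓ(S;α) for S ∈ (β(α),1). -/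
open Set

private lemma aff_shift_cvx {D : Set ℝ} {f : ℝ → ℝ} (h : StrictConvexOn ℝ D f) (c m b : ℝ) :
    StrictConvexOn ℝ D (fun s => f s - (c + m * (s - b))) := by
  refine ⟨h.1, fun x hx y hy hne a a' ha ha' hab => ?_⟩
  have key := h.2 hx hy hne ha ha' hab
  simp only [smul_eq_mul] at key ⊢
  have e : a * (c + m * (x - b)) + a' * (c + m * (y - b)) =
      c + m * ((a * x + a' * y) - b) := by linear_combination (c - m * b) * hab
  linarith

private lemma aff_shift_ccv {D : Set ℝ} {f : ℝ → ℝ} (h : StrictConcaveOn ℝ D f) (c m b : ℝ) :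
    StrictConcaveOn ℝ D (fun s => f s - (c + m * (s - b))) := by
  refine ⟨h.1, fun x hx y hy hne a a' ha ha' hab => ?_⟩
  have key := h.2 hx hy hne ha ha' hab
  simp only [smul_eq_mul] at key ⊢
  have e : a * (c + m * (x - b)) + a' * (c + m * (y - b)) =
      c + m * ((a * x + a' * y) - b) := by linear_combination (c - m * b) * hab
  linarith

/-- strict convex, zero at x, nonpositive at z, then negative strictly between. -/
private lemma cvx_between {D : Set ℝ} {f : ℝ → ℝ} {x y z : ℝ} (hf : StrictConvexOn ℝ D f)
    (hx : x ∈ D) (hz : z ∈ D) (hxy : x < y) (hyz : y < z) (h0 : f x = 0) (h1 : f z ≤ 0) :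
    f y < 0 := by
  have h := hf.slope_strict_mono_adjacent hx hz hxy hyz
  rw [div_lt_div_iff₀ (by linarith) (by linarith)] at h
  nlinarith

/-- strict convex, zeros at x and y, then positive after y. -/
private lemma cvx_after {D : Set ℝ} {f : ℝ → ℝ} {x y z : ℝ} (hf : StrictConvexOn ℝ D f)
    (hx : x ∈ D) (hz : z ∈ D) (hxy : x < y) (hyz : y < z) (h0 : f x = 0) (h1 : f y = 0) :
    0 < f z := by
  have h := hf.slope_strict_mono_adjacent hx hz hxy hyz
  rw [div_lt_div_iff₀ (by linarith) (by linarith)] at h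
  nlinarith

/-- strict concave, nonnegative at x and z, then positive strictly between. -/
private lemma ccv_between {D : Set ℝ} {f : ℝ → ℝ} {x y z : ℝ} (hf : StrictConcaveOn ℝ D f)
    (hx : x ∈ D) (hz : z ∈ D) (hxy : x < y) (hyz : y < z) (h0 : 0 ≤ f x) (h1 : 0 ≤ f z) :
    0 < f y := by
  have h := hf.slope_anti_adjacent hx hz hxy hyz
  rw [div_lt_div_iff₀ (by linarith) (by linarith)] at h
  nlinarith

/-- strict concave, positive at x, zero at y, then negative after y. -/
private lemma ccv_after {D : Set ℝ} {f : ℝ → ℝ} {x y z : ℝ} (hf : StrictConcaveOn ℝ D f)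
    (hx : x ∈ D) (hz : z ∈ D) (hxy : x < y) (hyz : y < z) (h0 : 0 < f x) (h1 : f y = 0) :
    f z < 0 := by
  have h := hf.slope_anti_adjacent hx hz hxy hyz
  rw [div_lt_div_iff₀ (by linarith) (by linarith)] at h
  nlinarith

/-- strict concave, zero at y, positive at z, then negative before y. -/
private lemma ccv_before {D : Set ℝ} {f : ℝ → ℝ} {x y z : ℝ} (hf : StrictConcaveOn ℝ D f)
    (hx : x ∈ D) (hz : z ∈ D) (hxy : x < y) (hyz : y < z) (h0 : f y = 0) (h1 : 0 < f z) :
    f x < 0 := by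
  have h := hf.slope_anti_adjacent hx hz hxy hyz
  rw [div_lt_div_iff₀ (by linarith) (by linarith)] at h
  nlinarith

/-- For S̃ < α < S̄ the chord ℓ(·;α) through (S_B,F(S_B)) and (α,F(α))
meets the graph of F at exactly one further point β(α) ∈ (α,1), with F below the
chord on (S_B,α), above on (α,β(α)), and below on (β(α),1). -/
theorem stmt6 (F : ℝ → ℝ) (hF : ContDiffOn ℝ 2 F (Set.Icc 0 1))
    (hF0 : F 0 = 0) (hF1 : F 1 = 1)
    (hF' : ∀ S ∈ Set.Ioo (0:ℝ) 1, 0 < deriv F S)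
    (So : ℝ) (hSo : So ∈ Set.Ioo (0:ℝ) 1)
    (hconv : ∀ S ∈ Set.Ioo 0 So, 0 < deriv (deriv F) S)
    (hconc : ∀ S ∈ Set.Ioo So 1, deriv (deriv F) S < 0)
    (SB Sunder Stilde Sbar : ℝ)
    (hSB : SB ∈ Set.Ioo (0:ℝ) So) (hSBu : SB < Sunder)
    (hSunder : Sunder ∈ Set.Ioo (0:ℝ) 1 ∧
      deriv F Sunder = (1 - F Sunder) / (1 - Sunder))
    (hStilde : Stilde ∈ Set.Ioo SB 1 ∧
      F Stilde = F SB + (1 - F SB) * (Stilde - SB) / (1 - SB))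
    (hSbar : Sbar ∈ Set.Ioo SB 1 ∧
      deriv F Sbar = (F Sbar - F SB) / (Sbar - SB)) :
    ∀ α ∈ Set.Ioo Stilde Sbar,
      ∃ β ∈ Set.Ioo α 1,
        F β = F SB + (F α - F SB) / (α - SB) * (β - SB) ∧
        (∀ b ∈ Set.Ioo α 1, F b = F SB + (F α - F SB) / (α - SB) * (b - SB) → b = β) ∧
        (∀ S ∈ Set.Ioo SB α, F S < F SB + (F α - F SB) / (α - SB) * (S - SB)) ∧
        (∀ S ∈ Set.Ioo α β, F SB + (F α - F SB) / (α - SB) * (S - SB) < F S) ∧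
        (∀ S ∈ Set.Ioo β 1, F S < F SB + (F α - F SB) / (α - SB) * (S - SB)) := by
  obtain ⟨hSbarI, hSbarEq⟩ := hSbar
  obtain ⟨hStI, hStEq⟩ := hStilde
  obtain ⟨hSB0, hSBSo⟩ := hSB
  obtain ⟨hSo0, hSo1⟩ := hSo
  have hcont : ContinuousOn F (Icc 0 1) := hF.continuousOn
  have hcvx : StrictConvexOn ℝ (Icc 0 So) F := by
    apply strictConvexOn_of_deriv2_pos (convex_Icc _ _)
      (hcont.mono (Icc_subset_Icc le_rfl hSo1.le))
    intro x hx
    rw [interior_Icc] at hx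
    simpa using hconv x hx
  have hccv : StrictConcaveOn ℝ (Icc So 1) F := by
    apply strictConcaveOn_of_deriv2_neg (convex_Icc _ _)
      (hcont.mono (Icc_subset_Icc hSo0.le le_rfl))
    intro x hx
    rw [interior_Icc] at hx
    simpa using hconc x hx
  have hdSbar : DifferentiableAt ℝ F Sbar := by
    have h1 : Icc (0:ℝ) 1 ∈ nhds Sbar := Icc_mem_nhds (lt_trans hSB0 hSbarI.1) hSbarI.2
    exact (hF.contDiffAt h1).differentiableAt two_ne_zero
  set φb := deriv F Sbar with hφb
  have hSBbar : SB < Sbar := hSbarI.1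
  have hbarSB : (0:ℝ) < Sbar - SB := by linarith
  have hEq : F Sbar - F SB = φb * (Sbar - SB) := by
    rw [hSbarEq]
    exact (div_mul_cancel₀ _ (ne_of_gt hbarSB)).symm
  have hSoSbar : So < Sbar := by
    by_contra h
    push_neg at h
    have hs := hcvx.slope_lt_deriv ⟨hSB0.le, hSBSo.le⟩ ⟨by linarith, h⟩ hSBbar hdSbar
    rw [slope_def_field] at hs
    rw [← hSbarEq, hφb] at hs
    exact lt_irrefl _ hs
  have hSbarM : Sbar ∈ Icc So 1 := ⟨hSoSbar.le, hSbarI.2.le⟩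
  have tangent : ∀ s ∈ Icc So 1, s ≠ Sbar → F s < F Sbar + φb * (s - Sbar) := by
    intro s hs hne
    rcases lt_or_gt_of_ne hne with hlt | hgt
    · have h := hccv.deriv_lt_slope hs hSbarM hlt hdSbar
      rw [slope_def_field, ← hφb, lt_div_iff₀ (by linarith : (0:ℝ) < Sbar - s)] at h
      nlinarith
    · have h := hccv.slope_lt_deriv hSbarM hs hgt hdSbar
      rw [slope_def_field, ← hφb, div_lt_iff₀ (by linarith : (0:ℝ) < s - Sbar)] at h
      nlinarith
  have chordC : ∀ s, SB < s → s < 1 → s ≠ Sbar → F s < F SB + φb * (s - SB) := by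
    intro s hs1 hs2 hne
    by_cases hSos : So ≤ s
    · have h := tangent s ⟨hSos, hs2.le⟩ hne
      have e : φb * (Sbar - SB) + φb * (s - Sbar) = φb * (s - SB) := by ring
      linarith
    · push_neg at hSos
      have hSoT : F So < F SB + φb * (So - SB) := by
        have h := tangent So ⟨le_rfl, hSo1.le⟩ (ne_of_lt hSoSbar)
        have e : φb * (Sbar - SB) + φb * (So - Sbar) = φb * (So - SB) := by ring
        linarith
      have adj := hcvx.convexOn.slope_mono_adjacent (x := SB) (y := s) (z := So)
        ⟨hSB0.le, hSBSo.le⟩ ⟨by linarith, le_rfl⟩ hs1 hSos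
      rw [div_le_div_iff₀ (by linarith) (by linarith)] at adj
      by_contra hcon
      push_neg at hcon
      have e2 : φb * (So - SB) - φb * (s - SB) = φb * (So - s) := by ring
      have h1 : F So - F s < φb * (So - s) := by linarith
      have h2 : φb * (s - SB) ≤ F s - F SB := by linarith
      have h3 := mul_lt_mul_of_pos_right h1 (show (0:ℝ) < s - SB by linarith)
      have h4 := mul_le_mul_of_nonneg_right h2 (show (0:ℝ) ≤ So - s by linarith)
      have e3 : φb * (s - SB) * (So - s) = φb * (So - s) * (s - SB) := by ring
      linarith
  intro α hα
  obtain ⟨hStα, hαSbar⟩ := hα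
  have hSBα : SB < α := lt_trans hStI.1 hStα
  have hα1 : α < 1 := lt_trans hαSbar hSbarI.2
  have hαSB : (0:ℝ) < α - SB := by linarith
  set m := (F α - F SB) / (α - SB) with hm
  have hmEq : m * (α - SB) = F α - F SB := div_mul_cancel₀ _ (ne_of_gt hαSB)
  have hmφ : m < φb := by
    have h := chordC α hSBα hα1 (ne_of_lt hαSbar)
    rw [hm, div_lt_iff₀ hαSB]
    linarith
  set g : ℝ → ℝ := fun s => F s - (F SB + m * (s - SB)) with hg
  have gcvx : StrictConvexOn ℝ (Icc 0 So) g := by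
    rw [hg]; exact aff_shift_cvx hcvx (F SB) m SB
  have gccv : StrictConcaveOn ℝ (Icc So 1) g := by
    rw [hg]; exact aff_shift_ccv hccv (F SB) m SB
  have gSB : g SB = 0 := by simp only [hg]; ring
  have gα : g α = 0 := by simp only [hg]; linarith
  have gSbar : 0 < g Sbar := by
    simp only [hg]
    have := mul_lt_mul_of_pos_right hmφ hbarSB
    linarith
  set lam := (1 - F SB) / (1 - SB) with hlam
  have h1SB : (0:ℝ) < 1 - SB := by linarith
  have hlamEq : lam * (1 - SB) = 1 - F SB := div_mul_cancel₀ _ (ne_of_gt h1SB)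
  set d : ℝ → ℝ := fun s => F s - (F SB + lam * (s - SB)) with hd
  have dcvx : StrictConvexOn ℝ (Icc 0 So) d := by
    rw [hd]; exact aff_shift_cvx hcvx (F SB) lam SB
  have dccv : StrictConcaveOn ℝ (Icc So 1) d := by
    rw [hd]; exact aff_shift_ccv hccv (F SB) lam SB
  have dSB : d SB = 0 := by simp only [hd]; ring
  have d1 : d 1 = 0 := by simp only [hd]; rw [hF1]; linarith
  have dSt : d Stilde = 0 := by
    simp only [hd, hlam]
    rw [hStEq]
    ring
  have dα : 0 < d α := by
    by_cases hαSo : α ≤ So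
    · exact cvx_after dcvx ⟨hSB0.le, hSBSo.le⟩ ⟨by linarith, hαSo⟩ hStI.1 hStα dSB dSt
    · push_neg at hαSo
      by_cases hStSo : So < Stilde
      · exact ccv_between dccv ⟨hStSo.le, hStI.2.le⟩ (right_mem_Icc.mpr hSo1.le)
          hStα hα1 (le_of_eq dSt.symm) (le_of_eq d1.symm)
      · push_neg at hStSo
        have hdSo : 0 ≤ d So := by
          rcases lt_or_eq_of_le hStSo with h | h
          · exact le_of_lt (cvx_after dcvx ⟨hSB0.le, hSBSo.le⟩
              (right_mem_Icc.mpr hSo0.le) hStI.1 h dSB dSt)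
          · rw [← h]; exact le_of_eq dSt.symm
        exact ccv_between dccv (left_mem_Icc.mpr hSo1.le) (right_mem_Icc.mpr hSo1.le)
          hαSo hα1 hdSo (le_of_eq d1.symm)
  have hlamm : lam < m := by
    have h : lam * (α - SB) < F α - F SB := by simp only [hd] at dα; linarith
    rw [← hmEq] at h
    exact lt_of_mul_lt_mul_right h hαSB.le
  have g1 : g 1 < 0 := by
    simp only [hg]
    rw [hF1]
    have := mul_lt_mul_of_pos_right hlamm h1SB
    linarith
  have gcont : ContinuousOn g (Icc Sbar 1) := by
    rw [hg]
    exact (hcont.mono (Icc_subset_Icc (by linarith) le_rfl)).sub (by fun_prop)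
  obtain ⟨β, hβI, hβ0⟩ := intermediate_value_Ioo' hSbarI.2.le gcont ⟨g1, gSbar⟩
  have hαβ : α < β := lt_trans hαSbar hβI.1
  have hβ1 : β < 1 := hβI.2
  have hSoβ : So < β := lt_trans hSoSbar hβI.1
  have signMid : ∀ S, α < S → S < β → 0 < g S := by
    intro S h1 h2
    by_cases hαSo : So ≤ α
    · exact ccv_between gccv ⟨hαSo, hα1.le⟩ ⟨hSoβ.le, hβ1.le⟩ h1 h2
        (le_of_eq gα.symm) (le_of_eq hβ0.symm)
    · push_neg at hαSo
      by_cases hSSo : S ≤ So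
      · exact cvx_after gcvx ⟨hSB0.le, hSBSo.le⟩ ⟨by linarith, hSSo⟩ hSBα h1 gSB gα
      · push_neg at hSSo
        have hgSo : 0 < g So := cvx_after gcvx ⟨hSB0.le, hSBSo.le⟩
          (right_mem_Icc.mpr hSo0.le) hSBα hαSo gSB gα
        exact ccv_between gccv (left_mem_Icc.mpr hSo1.le) ⟨hSoβ.le, hβ1.le⟩
          hSSo h2 hgSo.le (le_of_eq hβ0.symm)
  have signRight : ∀ S, β < S → S < 1 → g S < 0 := by
    intro S h1 h2
    exact ccv_after gccv hSbarM ⟨by linarith, h2.le⟩ hβI.1 h1 gSbar hβ0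
  have signLeft : ∀ S, SB < S → S < α → g S < 0 := by
    intro S h1 h2
    by_cases hαSo : α ≤ So
    · exact cvx_between gcvx ⟨hSB0.le, hSBSo.le⟩ ⟨by linarith, hαSo⟩ h1 h2 gSB (le_of_eq gα)
    · push_neg at hαSo
      by_cases hSSo : So ≤ S
      · exact ccv_before gccv ⟨hSSo, by linarith⟩ hSbarM h2 hαSbar gα gSbar
      · push_neg at hSSo
        have hgSo : g So < 0 := ccv_before gccv (left_mem_Icc.mpr hSo1.le) hSbarM
          hαSo hαSbar gα gSbar
        exact cvx_between gcvx ⟨hSB0.le, hSBSo.le⟩ (right_mem_Icc.mpr hSo0.le)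
          h1 hSSo gSB hgSo.le
  refine ⟨β, ⟨hαβ, hβ1⟩, ?_, ?_, ?_, ?_, ?_⟩
  · have h := hβ0; simp only [hg] at h; linarith
  · intro b hb hbeq
    have hgb : g b = 0 := by simp only [hg]; linarith
    rcases lt_trichotomy b β with h | h | h
    · exact absurd hgb (ne_of_gt (signMid b hb.1 h))
    · exact h
    · exact absurd hgb (ne_of_lt (signRight b h hb.2))
  · intro S hS
    have h := signLeft S hS.1 hS.2; simp only [hg] at h; linarith
  · intro S hS
    have h := signMid S hS.1 hS.2; simp only [hg] at h; linarith
  · intro S hS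
    have h := signRight S hS.1 hS.2; simp only [hg] at h; linarith
end

section
/- Let G : [S_B, S_m] → ℝ be continuous with G(S_B) = 0, let p ∈ C¹([S_B,S_m]) be strictly decreasing, let c, τ > 0, and suppose w ∈ C¹((S_B,S_m)) ∩ C([S_B,S_m]) satisfies w(S_B) = p(S_B), w(S) < p(S) on (S_B, S_m), and the ODE w'(S) = cτ·G(S)/(p(S) − w(S)) on (S_B, S_m). Then ((p−w)²)'(S) ≤ −2cτ·G(S) for all S ∈ (S_B, S_m), and hence (p(S) − w(S))² ≤ 2cτ·Φ(S) where Φ(S) = −∫_{S_B}^{S} G. -/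
/-- Pointwise bound ((p−w)²)' ≤ −2cτG and hence
(p−w)² ≤ 2cτΦ with Φ(S) = −∫_{S_B}^S G. -/
theorem stmt7 (SB Sm c τ : ℝ) (hS : SB < Sm) (hc : 0 < c) (hτ : 0 < τ)
    (G p w : ℝ → ℝ)
    (hG : ContinuousOn G (Set.Icc SB Sm)) (hGB : G SB = 0)
    (hp : StrictAntiOn p (Set.Icc SB Sm))
    (hpd : ∀ S ∈ Set.Ioo SB Sm, DifferentiableAt ℝ p S)
    (hwc : ContinuousOn w (Set.Icc SB Sm))
    (hwd : ∀ S ∈ Set.Ioo SB Sm, DifferentiableAt ℝ w S)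
    (hwB : w SB = p SB)
    (hwlt : ∀ S ∈ Set.Ioo SB Sm, w S < p S)
    (hode : ∀ S ∈ Set.Ioo SB Sm, deriv w S = c * τ * G S / (p S - w S)) :
    (∀ S ∈ Set.Ioo SB Sm,
        deriv (fun t => (p t - w t) ^ 2) S ≤ -2 * c * τ * G S) ∧
      ∀ S ∈ Set.Ioo SB Sm,
        (p S - w S) ^ 2 ≤ 2 * c * τ * (-(∫ t in SB..S, G t)) := by
  -- derivative of (p - w)^2
  have hsq : ∀ S ∈ Set.Ioo SB Sm, HasDerivAt (fun t => (p t - w t) ^ 2)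
      (2 * (p S - w S) * (deriv p S - deriv w S)) S := by
    intro S hS'
    have h := (((hpd S hS').hasDerivAt).sub ((hwd S hS').hasDerivAt)).pow 2
    exact h.congr_deriv (by simp)
  -- deriv p ≤ 0 on the interior
  have hp' : ∀ S ∈ Set.Ioo SB Sm, deriv p S ≤ 0 := by
    intro S hS'
    have hd := (hpd S hS').hasDerivAt
    rw [hasDerivAt_iff_tendsto_slope] at hd
    have hd' : Filter.Tendsto (slope p S) (nhdsWithin S (Set.Ioi S)) (nhds (deriv p S)) :=
      hd.mono_left (nhdsWithin_mono _ (fun t ht => ne_of_gt ht))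
    refine le_of_tendsto hd' ?_
    filter_upwards [Ioo_mem_nhdsGT_of_mem ⟨le_refl S, hS'.2⟩] with t ht
    have hpt : p t < p S :=
      hp ⟨hS'.1.le, hS'.2.le⟩ ⟨(hS'.1.trans ht.1).le, ht.2.le⟩ ht.1
    have : slope p S t = (p t - p S) / (t - S) := by
      simp [slope_def_field, div_eq_div_iff]
    rw [this]
    exact div_nonpos_iff.2 (Or.inr ⟨by linarith, sub_nonneg.2 ht.1.le⟩)
  -- Part 1
  have part1 : ∀ S ∈ Set.Ioo SB Sm,
      deriv (fun t => (p t - w t) ^ 2) S ≤ -2 * c * τ * G S := by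
    intro S hS'
    have hpos : 0 < p S - w S := sub_pos.2 (hwlt S hS')
    rw [(hsq S hS').deriv]
    have hw' : (p S - w S) * deriv w S = c * τ * G S := by
      rw [hode S hS']; field_simp
    nlinarith [mul_nonpos_of_nonneg_of_nonpos hpos.le (hp' S hS')]
  refine ⟨part1, ?_⟩
  -- Part 2
  intro S hS'
  set φ : ℝ → ℝ := fun t => (p t - w t) ^ 2 + 2 * c * τ * ∫ s in SB..t, G s with hφ
  -- derivative of the primitive
  have hF : ∀ t ∈ Set.Ioo SB Sm, HasDerivAt (fun u => ∫ s in SB..u, G s) (G t) t := by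
    intro t ht
    have hsub : Set.uIcc SB t ⊆ Set.Icc SB Sm := by
      rw [Set.uIcc_of_le ht.1.le]
      exact Set.Icc_subset_Icc le_rfl ht.2.le
    have hint : IntervalIntegrable G MeasureTheory.volume SB t :=
      (hG.mono hsub).intervalIntegrable
    have hct : ContinuousAt G t :=
      hG.continuousAt (Icc_mem_nhds ht.1 ht.2)
    exact intervalIntegral.integral_hasDerivAt_right hint
      (ContinuousOn.stronglyMeasurableAtFilter isOpen_Ioo (hG.mono Set.Ioo_subset_Icc_self)
        t ht) hct
  have hφd : ∀ t ∈ Set.Ioo SB Sm, HasDerivAt φ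
      (2 * (p t - w t) * (deriv p t - deriv w t) + 2 * c * τ * G t) t := by
    intro t ht
    exact (hsq t ht).add (((hF t ht).const_mul (2 * c * τ)))
  have hφ' : ∀ t ∈ Set.Ioo SB Sm, deriv φ t ≤ 0 := by
    intro t ht
    rw [(hφd t ht).deriv]
    have h1 := part1 t ht
    rw [(hsq t ht).deriv] at h1
    linarith
  -- φ is antitone on any [t₀, S] ⊆ Ioo SB Sm
  have key : ∀ t₀ ∈ Set.Ioo SB S, φ S ≤ φ t₀ := by
    intro t₀ ht₀
    have hsub : Set.Icc t₀ S ⊆ Set.Ioo SB Sm :=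
      fun x hx => ⟨ht₀.1.trans_le hx.1, lt_of_le_of_lt hx.2 hS'.2⟩
    have hcont : ContinuousOn φ (Set.Icc t₀ S) :=
      fun x hx => ((hφd x (hsub hx)).differentiableAt).continuousAt.continuousWithinAt
    have hdiff : DifferentiableOn ℝ φ (interior (Set.Icc t₀ S)) := by
      intro x hx
      rw [interior_Icc] at hx
      exact ((hφd x (hsub ⟨hx.1.le, hx.2.le⟩)).differentiableAt).differentiableWithinAt
    have hanti : AntitoneOn φ (Set.Icc t₀ S) := by
      refine antitoneOn_of_deriv_nonpos (convex_Icc t₀ S) hcont hdiff ?_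
      intro x hx
      rw [interior_Icc] at hx
      exact hφ' x (hsub ⟨hx.1.le, hx.2.le⟩)
    exact hanti ⟨le_rfl, (ht₀.2).le⟩ ⟨ht₀.2.le, le_rfl⟩ ht₀.2.le
  -- bound φ t₀ by a quantity tending to 0 as t₀ → SB⁺
  have hbound : ∀ t₀ ∈ Set.Ioo SB S, φ t₀ ≤ (w SB - w t₀) ^ 2 + 2 * c * τ * ∫ s in SB..t₀, G s := by
    intro t₀ ht₀
    have ht₀' : t₀ ∈ Set.Ioo SB Sm := ⟨ht₀.1, ht₀.2.trans hS'.2⟩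
    have h1 : 0 < p t₀ - w t₀ := sub_pos.2 (hwlt t₀ ht₀')
    have h2 : p t₀ < p SB :=
      hp ⟨le_rfl, hS.le⟩ ⟨ht₀'.1.le, ht₀'.2.le⟩ ht₀.1
    have h3 : p t₀ - w t₀ ≤ w SB - w t₀ := by rw [hwB]; linarith
    have : (p t₀ - w t₀) ^ 2 ≤ (w SB - w t₀) ^ 2 := by nlinarith
    simp only [hφ]
    linarith
  -- the bound tends to 0
  have hle : nhdsWithin SB (Set.Ioi SB) ≤ nhdsWithin SB (Set.Icc SB Sm) :=
    nhdsWithin_le_of_mem (Filter.mem_of_superset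
      (Ioo_mem_nhdsGT_of_mem ⟨le_rfl, hS⟩) Set.Ioo_subset_Icc_self)
  have htend : Filter.Tendsto (fun t₀ => (w SB - w t₀) ^ 2 + 2 * c * τ * ∫ s in SB..t₀, G s)
      (nhdsWithin SB (Set.Ioi SB)) (nhds 0) := by
    have hw0 : Filter.Tendsto w (nhdsWithin SB (Set.Ioi SB)) (nhds (w SB)) :=
      ((hwc SB ⟨le_rfl, hS.le⟩).tendsto).mono_left hle
    have hFc : Filter.Tendsto (fun t₀ => ∫ s in SB..t₀, G s)
        (nhdsWithin SB (Set.Ioi SB)) (nhds 0) := by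
      have hcF : ContinuousOn (fun x => ∫ t in SB..x, G t) (Set.uIcc SB Sm) := by
        refine intervalIntegral.continuousOn_primitive_interval ?_
        rw [Set.uIcc_of_le hS.le]
        exact (hG.mono le_rfl).integrableOn_compact isCompact_Icc
      have := (hcF SB (by rw [Set.uIcc_of_le hS.le]; exact ⟨le_rfl, hS.le⟩)).tendsto
      rw [intervalIntegral.integral_same] at this
      refine this.mono_left ?_
      rwa [Set.uIcc_of_le hS.le]
    have hsum : Filter.Tendsto (fun t₀ => (w SB - w t₀) ^ 2 + 2 * c * τ * ∫ s in SB..t₀, G s)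
        (nhdsWithin SB (Set.Ioi SB)) (nhds ((w SB - w SB) ^ 2 + 2 * c * τ * 0)) :=
      (((tendsto_const_nhds : Filter.Tendsto (fun _ : ℝ => w SB) (nhdsWithin SB (Set.Ioi SB)) (nhds (w SB)))).sub hw0).pow 2 |>.add
        (hFc.const_mul (2 * c * τ))
    simpa using hsum
  have : φ S ≤ 0 := by
    refine ge_of_tendsto htend ?_
    filter_upwards [Ioo_mem_nhdsGT_of_mem ⟨le_refl SB, hS'.1⟩] with t₀ ht₀
    exact (key t₀ ht₀).trans (hbound t₀ ht₀)
  simp only [hφ] at this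
  linarith
end

section
/- Let v₁, v₂ > 0 on (S_B, S_m] solve (v_k²)'(S) = 2 v_k(S) p'(S) − 2 d_k G(S) with v_k(S_B) = 0, where p' < 0, d₁ < d₂, and suppose v₁ ≤ v₂ on (S_B, S_m]. Then for all S ∈ (S_B, S_m]: 0 ≤ v₂(S)² − v₁(S)² ≤ 2(d₂ − d₁) Φ(S), where Φ(S) = −∫_{S_B}^S G. -/
/-- Continuous dependence: 0 ≤ v₂² − v₁² ≤ 2(d₂−d₁)Φ with
Φ(S) = −∫_{S_B}^S G. -/
theorem stmt11 (SB Sm d₁ d₂ : ℝ) (hS : SB < Sm) (hd : d₁ < d₂)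
    (v₁ v₂ p G : ℝ → ℝ)
    (hG : ContinuousOn G (Set.Icc SB Sm)) (hGB : G SB = 0)
    (hp' : ∀ S ∈ Set.Ioo SB Sm, deriv p S < 0)
    (hv₁0 : v₁ SB = 0) (hv₂0 : v₂ SB = 0)
    (hv₁pos : ∀ S ∈ Set.Ioc SB Sm, 0 < v₁ S)
    (hv₂pos : ∀ S ∈ Set.Ioc SB Sm, 0 < v₂ S)
    (hv₁c : ContinuousOn v₁ (Set.Icc SB Sm)) (hv₂c : ContinuousOn v₂ (Set.Icc SB Sm))
    (hode₁ : ∀ S ∈ Set.Ioo SB Sm,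
      HasDerivAt (fun t => v₁ t ^ 2) (2 * v₁ S * deriv p S - 2 * d₁ * G S) S)
    (hode₂ : ∀ S ∈ Set.Ioo SB Sm,
      HasDerivAt (fun t => v₂ t ^ 2) (2 * v₂ S * deriv p S - 2 * d₂ * G S) S)
    (hle : ∀ S ∈ Set.Ioc SB Sm, v₁ S ≤ v₂ S) :
    ∀ S ∈ Set.Ioc SB Sm,
      0 ≤ v₂ S ^ 2 - v₁ S ^ 2 ∧
        v₂ S ^ 2 - v₁ S ^ 2 ≤ 2 * (d₂ - d₁) * (-(∫ t in SB..S, G t)) := by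
  -- F(x) = 2(d₂-d₁)(-∫_{SB}^x G) - (v₂ x ^2 - v₁ x ^2) is monotone on [SB, Sm]
  set F : ℝ → ℝ := fun x =>
    2 * (d₂ - d₁) * (-(∫ t in SB..x, G t)) - (v₂ x ^ 2 - v₁ x ^ 2) with hF
  have hGint : MeasureTheory.IntegrableOn G (Set.uIcc SB Sm) :=
    (hG.mono (by rw [Set.uIcc_of_le hS.le])).integrableOn_compact
      (by rw [Set.uIcc_of_le hS.le]; exact isCompact_Icc)
  have hIcont : ContinuousOn (fun x => ∫ t in SB..x, G t) (Set.Icc SB Sm) := by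
    have := intervalIntegral.continuousOn_primitive_interval
      (μ := MeasureTheory.volume) (f := G) (a := SB) (b := Sm) hGint
    rwa [Set.uIcc_of_le hS.le] at this
  have hFc : ContinuousOn F (Set.Icc SB Sm) :=
    (continuousOn_const.mul hIcont.neg).sub ((hv₂c.pow 2).sub (hv₁c.pow 2))
  -- derivative of F at interior points
  have hFd : ∀ x ∈ Set.Ioo SB Sm,
      HasDerivAt F (-(2 * (v₂ x - v₁ x) * deriv p x)) x := by
    intro x hx
    have hGx : ContinuousAt G x :=
      (hG.continuousWithinAt (Set.Ioo_subset_Icc_self hx)).continuousAt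
        (Icc_mem_nhds hx.1 hx.2)
    have hmeas : StronglyMeasurableAtFilter G (nhds x) :=
      (hG.mono Set.Ioo_subset_Icc_self).stronglyMeasurableAtFilter isOpen_Ioo x hx
    have hint : IntervalIntegrable G MeasureTheory.volume SB x := by
      apply (hG.mono ?_).intervalIntegrable
      rw [Set.uIcc_of_le hx.1.le]
      exact Set.Icc_subset_Icc le_rfl hx.2.le
    have hI : HasDerivAt (fun u => ∫ t in SB..u, G t) (G x) x :=
      intervalIntegral.integral_hasDerivAt_right hint hmeas hGx
    have hD : HasDerivAt F
        (2 * (d₂ - d₁) * (-(G x)) -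
          ((2 * v₂ x * deriv p x - 2 * d₂ * G x) -
            (2 * v₁ x * deriv p x - 2 * d₁ * G x))) x :=
      ((hI.neg.const_mul _).sub ((hode₂ x hx).sub (hode₁ x hx)))
    convert hD using 1
    ring
  have hFmono : MonotoneOn F (Set.Icc SB Sm) := by
    apply monotoneOn_of_deriv_nonneg (convex_Icc SB Sm) hFc
    · intro x hx
      rw [interior_Icc] at hx
      exact (hFd x hx).differentiableAt.differentiableWithinAt
    · intro x hx
      rw [interior_Icc] at hx
      rw [(hFd x hx).deriv]
      have h1 : v₁ x ≤ v₂ x := hle x ⟨hx.1, hx.2.le⟩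
      have h2 : deriv p x < 0 := hp' x hx
      nlinarith
  intro S hSm
  have hsq : v₁ S ^ 2 ≤ v₂ S ^ 2 :=
    pow_le_pow_left₀ (hv₁pos S hSm).le (hle S hSm) 2
  refine ⟨by linarith, ?_⟩
  have hF0 : F SB = 0 := by
    simp [hF, hv₁0, hv₂0]
  have := hFmono (Set.left_mem_Icc.2 hS.le)
    ⟨hSm.1.le, hSm.2⟩ hSm.1.le
  rw [hF0] at this
  simp only [hF] at this
  linarith
end

section
/- Let p be C¹ and strictly decreasing on [S_B, S_T], let G be C¹ with G(S_T) = 0 and G ≤ 0 on [S_B, S_T], set m₀ = sup_{[S_B,S_T]} G' < ∞ and P̲ = min_{[S_B,S_T]}(−p') > 0, and suppose w solves w' = cτG/(p−w) with w(S_B)=p(S_B), w < p on (S_B, S_T). If 0 < τ < P̲²/(4cm₀) and r ∈ (r⁻, r⁺) where r^± = (P̲/2)(1 ± √(1 − 4cτm₀/P̲²)), then w(S) > p(S) + r(S − S_T) for all S ∈ (S_B, S_T). -/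
set_option maxHeartbeats 1000000


/-- For small τ and r ∈ (r⁻, r⁺) the orbit w stays above the line
p(S) + r(S − S_T) on (S_B, S_T). -/
theorem stmt13 (SB ST c τ m₀ Pl r : ℝ) (hS : SB < ST) (hc : 0 < c) (hτ : 0 < τ)
    (hm₀ : 0 < m₀) (hPl : 0 < Pl)
    (p G w : ℝ → ℝ)
    (hpc : ContDiffOn ℝ 1 p (Set.Icc SB ST)) (hpanti : StrictAntiOn p (Set.Icc SB ST))
    (hP : ∀ S ∈ Set.Icc SB ST, Pl ≤ -deriv p S)
    (hGc : ContDiffOn ℝ 1 G (Set.Icc SB ST)) (hGT : G ST = 0)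
    (hGle : ∀ S ∈ Set.Icc SB ST, G S ≤ 0)
    (hm : ∀ S ∈ Set.Icc SB ST, deriv G S ≤ m₀)
    (hwB : w SB = p SB)
    (hwlt : ∀ S ∈ Set.Ioo SB ST, w S < p S)
    (hwc : ContinuousOn w (Set.Icc SB ST))
    (hode : ∀ S ∈ Set.Ioo SB ST, HasDerivAt w (c * τ * G S / (p S - w S)) S)
    (hτsmall : τ < Pl ^ 2 / (4 * c * m₀))
    (hr : r ∈ Set.Ioo (Pl / 2 * (1 - Real.sqrt (1 - 4 * c * τ * m₀ / Pl ^ 2)))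
                      (Pl / 2 * (1 + Real.sqrt (1 - 4 * c * τ * m₀ / Pl ^ 2)))) :
    ∀ S ∈ Set.Ioo SB ST, p S + r * (S - ST) < w S := by
  have hPl2 : (0:ℝ) < Pl ^ 2 := by positivity
  set s := Real.sqrt (1 - 4 * c * τ * m₀ / Pl ^ 2) with hs
  have harg_lt : 4 * c * τ * m₀ / Pl ^ 2 < 1 := by
    rw [div_lt_one hPl2]
    have h4 : (0:ℝ) < 4 * c * m₀ := by positivity
    have := (lt_div_iff₀ h4).mp hτsmall
    nlinarith
  have harg_pos : 0 < 4 * c * τ * m₀ / Pl ^ 2 := by positivity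
  have hs0 : 0 ≤ s := Real.sqrt_nonneg _
  have hssq : s ^ 2 = 1 - 4 * c * τ * m₀ / Pl ^ 2 :=
    Real.sq_sqrt (by linarith)
  have hs1 : s < 1 := by nlinarith
  have hssq' : Pl ^ 2 * s ^ 2 = Pl ^ 2 - 4 * c * τ * m₀ := by
    rw [hssq]; field_simp
  have hr0 : 0 < r := lt_trans (by nlinarith) hr.1
  -- Key quadratic fact
  have hkey : ¬ (0 ≤ r ^ 2 - Pl * r + c * τ * m₀) := by
    intro h
    have h1 : 0 < r - Pl / 2 * (1 - s) := sub_pos.2 hr.1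
    have h2 : 0 < Pl / 2 * (1 + s) - r := sub_pos.2 hr.2
    nlinarith [mul_pos h1 h2]
  -- the comparison function
  set f : ℝ → ℝ := fun S => w S - p S - r * (S - ST) with hfdef
  clear_value f
  have hfc : ContinuousOn f (Set.Icc SB ST) := by
    rw [hfdef]
    exact (hwc.sub hpc.continuousOn).sub
      ((continuous_const.mul (continuous_id.sub continuous_const)).continuousOn)
  have hfSB : 0 < f SB := by
    simp only [hfdef, hwB]
    nlinarith
  -- monotonicity of m₀ S - G S
  have hmono : MonotoneOn (fun S => m₀ * S - G S) (Set.Icc SB ST) := by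
    apply monotoneOn_of_deriv_nonneg (convex_Icc SB ST)
    · exact (continuousOn_const.mul continuousOn_id).sub hGc.continuousOn
    · intro x hx
      rw [interior_Icc] at hx
      have hGd : DifferentiableAt ℝ G x :=
        ((hGc.differentiableOn one_ne_zero) x (Set.mem_Icc_of_Ioo hx)).differentiableAt
          (Icc_mem_nhds hx.1 hx.2)
      have hh : HasDerivAt (fun S => m₀ * S - G S) (m₀ - deriv G x) x := by
        have h := ((hasDerivAt_id' x).const_mul m₀).sub hGd.hasDerivAt; rwa [mul_one] at h
      exact hh.differentiableAt.differentiableWithinAt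
    · intro x hx
      rw [interior_Icc] at hx
      have hGd : DifferentiableAt ℝ G x :=
        ((hGc.differentiableOn one_ne_zero) x (Set.mem_Icc_of_Ioo hx)).differentiableAt
          (Icc_mem_nhds hx.1 hx.2)
      have hh : HasDerivAt (fun S => m₀ * S - G S) (m₀ - deriv G x) x := by
        have h := ((hasDerivAt_id' x).const_mul m₀).sub hGd.hasDerivAt; rwa [mul_one] at h
      rw [hh.deriv]
      have := hm x (Set.mem_Icc_of_Ioo hx)
      linarith
  intro S₀ hS₀
  by_contra hcon
  push_neg at hcon
  have hfS₀ : f S₀ ≤ 0 := by simp only [hfdef]; linarith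
  -- first zero of f
  set Z : Set ℝ := Set.Icc SB S₀ ∩ f ⁻¹' {0} with hZdef
  have hfc' : ContinuousOn f (Set.Icc SB S₀) :=
    hfc.mono (Set.Icc_subset_Icc le_rfl hS₀.2.le)
  have hZne : Z.Nonempty := by
    have h0 : (0:ℝ) ∈ Set.Icc (f S₀) (f SB) := ⟨hfS₀, hfSB.le⟩
    obtain ⟨x, hx, hfx⟩ := intermediate_value_Icc' hS₀.1.le hfc' h0
    exact ⟨x, hx, by simp [hfx]⟩
  have hZclosed : IsClosed Z :=
    hfc'.preimage_isClosed_of_isClosed isClosed_Icc isClosed_singleton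
  have hZbdd : BddBelow Z := ⟨SB, fun x hx => hx.1.1⟩
  obtain ⟨Si, hSiZ, hSimin⟩ : ∃ Si ∈ Z, ∀ x ∈ Z, Si ≤ x :=
    ⟨sInf Z, hZclosed.csInf_mem hZne hZbdd, fun x hx => csInf_le hZbdd hx⟩
  have hfSi : f Si = 0 := hSiZ.2
  have hSiIcc : Si ∈ Set.Icc SB S₀ := hSiZ.1
  have hSiSB : SB < Si := by
    rcases lt_or_eq_of_le hSiIcc.1 with h | h
    · exact h
    · exfalso; rw [← h] at hfSi; linarith
  have hSiIoo : Si ∈ Set.Ioo SB ST := ⟨hSiSB, lt_of_le_of_lt hSiIcc.2 hS₀.2⟩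
  -- f is positive strictly before Si
  have hpos : ∀ S, SB ≤ S → S < Si → 0 < f S := by
    intro S hS1 hS2
    by_contra hnp
    push_neg at hnp
    have hSIcc : S ∈ Set.Icc SB S₀ := ⟨hS1, le_trans hS2.le hSiIcc.2⟩
    have h0 : (0:ℝ) ∈ Set.Icc (f S) (f SB) := ⟨hnp, hfSB.le⟩
    obtain ⟨x, hx, hfx⟩ := intermediate_value_Icc' hS1
      (hfc'.mono (Set.Icc_subset_Icc le_rfl hSIcc.2)) h0
    have hxZ : x ∈ Z := ⟨⟨hx.1, le_trans hx.2 hSIcc.2⟩, by simp [hfx]⟩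
    have := hSimin x hxZ
    linarith [lt_of_le_of_lt hx.2 hS2]
  -- derivative of f at Si
  have hpdiff : DifferentiableAt ℝ p Si :=
    ((hpc.differentiableOn one_ne_zero) Si (Set.mem_Icc_of_Ioo hSiIoo)).differentiableAt
      (Icc_mem_nhds hSiIoo.1 hSiIoo.2)
  have hf' : HasDerivAt f (c * τ * G Si / (p Si - w Si) - deriv p Si - r) Si := by
    have hw' := hode Si hSiIoo
    have hp' : HasDerivAt p (deriv p Si) Si := hpdiff.hasDerivAt
    have hl : HasDerivAt (fun S => r * (S - ST)) r Si := by
      simpa using ((hasDerivAt_id Si).sub_const ST).const_mul r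
    rw [hfdef]
    exact (hw'.sub hp').sub hl
  -- the derivative is ≤ 0 via slopes from the left
  have hds : Filter.Tendsto (slope f Si) (nhdsWithin Si (Set.Iio Si))
      (nhds (c * τ * G Si / (p Si - w Si) - deriv p Si - r)) := by
    have h := (hf'.hasDerivWithinAt (s := Set.Iio Si))
    rw [hasDerivWithinAt_iff_tendsto_slope] at h
    rwa [Set.diff_singleton_eq_self (by simp)] at h
  have hev : ∀ᶠ S in nhdsWithin Si (Set.Iio Si), slope f Si S ≤ 0 := by
    filter_upwards [Ioo_mem_nhdsLT hSiSB] with S hS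
    have hfS : 0 < f S := hpos S hS.1.le hS.2
    have hslope : slope f Si S = f S / (S - Si) := by
      rw [slope_def_field, hfSi]; ring_nf
    rw [hslope]
    exact (div_neg_of_pos_of_neg hfS (by linarith [hS.2])).le
  have hd0 : c * τ * G Si / (p Si - w Si) - deriv p Si - r ≤ 0 := le_of_tendsto hds hev
  -- identify p Si - w Si
  have hPW : p Si - w Si = r * (ST - Si) := by
    have h0 : w Si - p Si - r * (Si - ST) = 0 := by
      have h1 := hfSi; rw [hfdef] at h1; simpa using h1
    linarith
  have hD : 0 < ST - Si := by linarith [hSiIoo.2]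
  have hrD : 0 < r * (ST - Si) := mul_pos hr0 hD
  -- lower bound for G Si
  have hGlow : -(m₀ * (ST - Si)) ≤ G Si := by
    have := hmono (Set.mem_Icc_of_Ioo hSiIoo) (Set.right_mem_Icc.2 hS.le) hSiIoo.2.le
    simp only [hGT, sub_zero] at this
    linarith
  -- assemble the contradiction
  rw [hPW] at hd0
  have h1 : c * τ * G Si ≤ (deriv p Si + r) * (r * (ST - Si)) := by
    have hq : c * τ * G Si / (r * (ST - Si)) ≤ deriv p Si + r := by linarith
    have := mul_le_mul_of_nonneg_right hq hrD.le
    rwa [div_mul_cancel₀ _ (ne_of_gt hrD)] at this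
  have h2 : deriv p Si ≤ -Pl := by
    have := hP Si (Set.mem_Icc_of_Ioo hSiIoo); linarith
  have h3 : c * τ * (-(m₀ * (ST - Si))) ≤ c * τ * G Si :=
    mul_le_mul_of_nonneg_left hGlow (by positivity)
  have h5 : (deriv p Si + r) * (r * (ST - Si)) ≤ (r - Pl) * (r * (ST - Si)) :=
    mul_le_mul_of_nonneg_right (by linarith) hrD.le
  apply hkey
  nlinarith [hD, hr0, mul_pos hc hτ, h1, h3, h5]
end
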